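/- If Y ⊆ X are finite point sets in ℝ^d, then the layer number satisfies L(Y) ≤ L(X). -/

import Mathlib

open scoped Classical RealInnerProductSpace
open Metric MeasureTheory

/-- The set of extreme points (convex-layer vertices) of a finite point set. -/
noncomputable def extremePts {d : ℕ} (S : Finset (EuclideanSpace ℝ (Fin d))) :
    Finset (EuclideanSpace ℝ (Fin d)) :=
  S.filter fun x =>
    x ∉ convexHull ℝ ((S.erase x : Finset (EuclideanSpace ℝ (Fin d))) :
      Set (EuclideanSpace ℝ (Fin d)))

/-- `peel S k` is the set of points remaining after `k` peeling steps, i.e. `X_{k+1}`. -/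
noncomputable def peel {d : ℕ} (S : Finset (EuclideanSpace ℝ (Fin d))) :
    ℕ → Finset (EuclideanSpace ℝ (Fin d))
  | 0 => S
  | k + 1 => peel S k \ extremePts (peel S k)

/-- The layer number: the number of peeling steps needed to remove all points. -/
noncomputable def layerNum {d : ℕ} (S : Finset (EuclideanSpace ℝ (Fin d))) : ℕ :=
  sInf {k | peel S k = ∅}

lemma extremePts_nonempty {d : ℕ} {S : Finset (EuclideanSpace ℝ (Fin d))}
    (hS : S.Nonempty) : (extremePts S).Nonempty := by
  have hK : IsCompact (convexHull ℝ (S : Set (EuclideanSpace ℝ (Fin d)))) :=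
    S.finite_toSet.isCompact_convexHull (𝕜 := ℝ)
  obtain ⟨x, hx⟩ := hK.extremePoints_nonempty (convexHull_nonempty_iff.2 (by exact_mod_cast hS.to_set))
  have hxS : x ∈ S := extremePoints_convexHull_subset hx
  refine ⟨x, Finset.mem_filter.2 ⟨hxS, fun hmem => ?_⟩⟩
  have hconv : Convex ℝ (convexHull ℝ (S : Set (EuclideanSpace ℝ (Fin d))) \ {x}) :=
    ((convex_convexHull ℝ _).mem_extremePoints_iff_convex_diff.1 hx).2
  have hsub : (↑(S.erase x) : Set (EuclideanSpace ℝ (Fin d))) ⊆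
      convexHull ℝ (S : Set (EuclideanSpace ℝ (Fin d))) \ {x} := by
    intro y hy
    simp only [Finset.coe_erase, Set.mem_diff, Set.mem_singleton_iff] at hy ⊢
    exact ⟨subset_convexHull ℝ _ hy.1, hy.2⟩
  have := convexHull_min hsub hconv hmem
  exact this.2 rfl

lemma peel_mono {d : ℕ} {X Y : Finset (EuclideanSpace ℝ (Fin d))}
    (hYX : Y ⊆ X) : ∀ k, peel Y k ⊆ peel X k := by
  intro k
  induction k with
  | zero => exact hYX
  | succ k ih =>
    intro x hx
    rw [peel, Finset.mem_sdiff] at hx ⊢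
    refine ⟨ih hx.1, fun hext => hx.2 ?_⟩
    rw [extremePts, Finset.mem_filter] at hext ⊢
    refine ⟨hx.1, fun hmem => hext.2 (convexHull_mono ?_ hmem)⟩
    exact_mod_cast Finset.erase_subset_erase x ih

lemma peel_card_eventually_empty {d : ℕ} (S : Finset (EuclideanSpace ℝ (Fin d))) :
    peel S S.card = ∅ := by
  have key : ∀ k, (peel S k).card ≤ S.card - k := by
    intro k
    induction k with
    | zero => simp [peel]
    | succ k ih =>
      rcases Finset.eq_empty_or_nonempty (peel S k) with h | h
      · rw [peel, h]; simp
      · obtain ⟨x, hx⟩ := extremePts_nonempty h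
        have hxP : x ∈ peel S k := Finset.mem_filter.1 hx |>.1
        have : (peel S (k + 1)).card < (peel S k).card := by
          apply Finset.card_lt_card
          constructor
          · exact Finset.sdiff_subset
          · intro hsub
            have := hsub hxP
            rw [peel, Finset.mem_sdiff] at this
            exact this.2 hx
        omega
  have := key S.card
  simp only [Nat.sub_self, Nat.le_zero, Finset.card_eq_zero] at this
  exact this

theorem layerNum_mono {d : ℕ} (X Y : Finset (EuclideanSpace ℝ (Fin d)))
    (hYX : Y ⊆ X) :
    layerNum Y ≤ layerNum X := by
  have hne : layerNum X ∈ {k | peel X k = ∅} :=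
    Nat.sInf_mem ⟨X.card, peel_card_eventually_empty X⟩
  apply Nat.sInf_le
  have := peel_mono hYX (layerNum X)
  rw [hne] at this
  exact Finset.subset_empty.1 this
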